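/- For any set-valued function f : X → 𝒫(Z), the set of M_f-affine minorants of f coincides with the set of M_{K-eco f}-affine minorants of K-eco f; that is, H_f = H_{K-eco f}. -/

import Mathlib

open scoped Classical Pointwise
noncomputable section

variable {X : Type*} [AddCommGroup X] [Module ℝ X] [TopologicalSpace X]
  [IsTopologicalAddGroup X] [ContinuousSMul ℝ X]
variable {Z : Type*} [AddCommGroup Z] [Module ℝ Z] [TopologicalSpace Z]
  [IsTopologicalAddGroup Z] [ContinuousSMul ℝ Z]

/-- A set is evenly convex (e-convex) if it is the intersection of an arbitrary
(possibly empty) family of open half-spaces. -/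
def IsEConvex {Y : Type*} [AddCommGroup Y] [Module ℝ Y] [TopologicalSpace Y]
    (C : Set Y) : Prop :=
  ∃ S : Set ((Y →L[ℝ] ℝ) × ℝ), C = ⋂ p ∈ S, {y | p.1 y < p.2}

/-- The evenly convex hull of `C`: the smallest e-convex set containing `C`. -/
def eco {Y : Type*} [AddCommGroup Y] [Module ℝ Y] [TopologicalSpace Y]
    (C : Set Y) : Set Y :=
  ⋂₀ {D : Set Y | IsEConvex D ∧ C ⊆ D}

/-- The negative polar cone of `K`. -/
def negPolar (K : Set Z) : Set (Z →L[ℝ] ℝ) := {z' | ∀ z ∈ K, z' z ≤ 0}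

/-- `S_{(x*,z*)}(x) = {z | ⟨x,x*⟩ + ⟨z,z*⟩ < 0}`. -/
def Sopen (x' : X →L[ℝ] ℝ) (z' : Z →L[ℝ] ℝ) (x : X) : Set Z := {z | x' x + z' z < 0}

/-- `S̄_{(x*,z*)}(x) = {z | ⟨x,x*⟩ + ⟨z,z*⟩ ≤ 0}`. -/
def Sclosed (x' : X →L[ℝ] ℝ) (z' : Z →L[ℝ] ℝ) (x : X) : Set Z := {z | x' x + z' z ≤ 0}

/-- Effective domain of a set-valued function. -/
def svDom (f : X → Set Z) : Set X := {x | f x ≠ ∅}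

/-- A set-valued function is proper if its domain is nonempty and no value is all of `Z`. -/
def SVProper (f : X → Set Z) : Prop := svDom f ≠ ∅ ∧ ∀ x, f x ≠ Set.univ

/-- The `K`-epigraph of a set-valued function. -/
def epiK (K : Set Z) (f : X → Set Z) : Set (X × Z) := {p | p.2 ∈ f p.1 + K}

/-- `f` is `K`-e-convex if its `K`-epigraph is e-convex. -/
def IsKEConvex (K : Set Z) (f : X → Set Z) : Prop := IsEConvex (epiK K f)

/-- The `K`-e-convex hull of `f`. -/
def KEco (K : Set Z) (f : X → Set Z) : X → Set Z := fun x => {z | (x, z) ∈ eco (epiK K f)}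

/-- `g` is a (set-valued) minorant of `f`: `g(x) ≤_K f(x)`, i.e. `f(x)+K ⊆ g(x)+K`. -/
def IsMinorant (K : Set Z) (f g : X → Set Z) : Prop := ∀ x, f x + K ⊆ g x + K

/-- A `C`-affine set-valued function. -/
def IsCAffine (K : Set Z) (C : Set X) (a : X → Set Z) : Prop :=
  ∃ x' : X →L[ℝ] ℝ, ∃ z' ∈ negPolar K \ {0}, ∃ zt : Z,
    ∀ x, a x = if x ∈ C then Sopen x' z' x + {zt} else ∅

/-- `M_f = eco (dom f)`. -/
def Mf (f : X → Set Z) : Set X := eco (svDom f)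

/-- The set of all `M_f`-affine minorants of `f`. -/
def Hf (K : Set Z) (f : X → Set Z) : Set (X → Set Z) :=
  {a | IsCAffine K (Mf f) a ∧ IsMinorant K f a}

/-- A 𝒞-affine set-valued function: `C`-affine for some e-convex `C`. -/
def IsCalAffine (K : Set Z) (a : X → Set Z) : Prop :=
  ∃ C : Set X, IsEConvex C ∧ IsCAffine K C a

/-- The set of all 𝒞-affine minorants of `f`. -/
def Cf (K : Set Z) (f : X → Set Z) : Set (X → Set Z) :=
  {a | IsCalAffine K a ∧ IsMinorant K f a}

/-- An e-affine set-valued function. -/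
def IsEAffine (K : Set Z) (a : X → Set Z) : Prop :=
  ∃ x' y' : X →L[ℝ] ℝ, ∃ z' ∈ negPolar K \ {0}, ∃ zt : Z, ∃ α : ℝ,
    ∀ x, a x = if y' x < α then Sopen x' z' x + {zt} else ∅

/-- The set of all e-affine minorants of `f`. -/
def Ef (K : Set Z) (f : X → Set Z) : Set (X → Set Z) :=
  {a | IsEAffine K a ∧ IsMinorant K f a}

/-- The modified negation of a subset of `Z`: `-∅ = Z`, `-Z = ∅`,
and the pointwise negation otherwise. -/
def negSet (A : Set Z) : Set Z :=
  if A = ∅ then Set.univ else if A = Set.univ then ∅ else -A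

/-- The c-conjugate of a set-valued function `f`, defined (by `∅`-extension) on
`X* × X* × Z* × ℝ`; its meaningful domain is `X* × X* × (K*∖{0}) × ℝ`. -/
def cConj (K : Set Z) (f : X → Set Z)
    (w : (X →L[ℝ] ℝ) × (X →L[ℝ] ℝ) × (Z →L[ℝ] ℝ) × ℝ) : Set Z :=
  if w.2.2.1 ∈ negPolar K \ {0} ∧ svDom f ⊆ {x | w.2.1 x < w.2.2.2} then
    negSet (eco (⋃ x : X, (f x + Sclosed w.1 w.2.2.1 (-x))))
  else ∅

/-- The c'-conjugate of `g : X* × X* × Z* × ℝ → 𝒫(Z)`. -/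
def cPrimeConj (g : (X →L[ℝ] ℝ) × (X →L[ℝ] ℝ) × (Z →L[ℝ] ℝ) × ℝ → Set Z)
    (x : X) : Set Z :=
  if ∀ w : (X →L[ℝ] ℝ) × (X →L[ℝ] ℝ) × (Z →L[ℝ] ℝ) × ℝ, g w ≠ ∅ → w.2.1 x < w.2.2.2 then
    ⋂ w ∈ {w : (X →L[ℝ] ℝ) × (X →L[ℝ] ℝ) × (Z →L[ℝ] ℝ) × ℝ | g w ≠ ∅},
      (Sclosed w.1 w.2.2.1 x + negSet (g w))
  else ∅

/-- The support function of the `K`-epigraph of `f` relative to open half-spaces,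
with values in `ℝ ∪ {±∞}`. -/
def sigmaF (K : Set Z) (f : X → Set Z)
    (w : (X →L[ℝ] ℝ) × (X →L[ℝ] ℝ) × (Z →L[ℝ] ℝ) × ℝ) : EReal :=
  if svDom f ⊆ {x | w.2.1 x < w.2.2.2} then
    ⨆ p ∈ epiK K f, ((w.1 p.1 + w.2.2.1 p.2 : ℝ) : EReal)
  else ⊤

/-- `η_C(x*,z*)`: `0` if the supremum of `⟨x,x*⟩+⟨z,z*⟩` over `C` is not attained
(every value is strictly below the supremum), `1` otherwise. -/
def etaSet (C : Set (X × Z)) (x' : X →L[ℝ] ℝ) (z' : Z →L[ℝ] ℝ) : ℕ :=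
  if ∀ p ∈ C, ((x' p.1 + z' p.2 : ℝ) : EReal) < ⨆ q ∈ C, ((x' q.1 + z' q.2 : ℝ) : EReal)
  then 0 else 1


section auxEco

variable {Y W : Type*} [AddCommGroup Y] [Module ℝ Y] [TopologicalSpace Y]
  [AddCommGroup W] [Module ℝ W] [TopologicalSpace W]

lemma subset_eco (C : Set Y) : C ⊆ eco C := fun y hy =>
  Set.mem_sInter.2 fun _ hD => hD.2 hy

lemma eco_min {C D : Set Y} (hD : IsEConvex D) (h : C ⊆ D) : eco C ⊆ D :=
  Set.sInter_subset_of_mem ⟨hD, h⟩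

lemma eco_eq (C : Set Y) :
    eco C = ⋂ p ∈ {p : (Y →L[ℝ] ℝ) × ℝ | C ⊆ {y | p.1 y < p.2}}, {y | p.1 y < p.2} := by
  apply subset_antisymm
  · exact eco_min ⟨_, rfl⟩ (fun y hy => Set.mem_iInter₂.2 fun p hp => hp hy)
  · intro y hy D hD
    obtain ⟨⟨S, rfl⟩, hCD⟩ := hD
    refine Set.mem_iInter₂.2 fun p hp => ?_
    exact Set.mem_iInter₂.1 hy p (fun c hc => Set.mem_iInter₂.1 (hCD hc) p hp)

lemma eConvex_eco (C : Set Y) : IsEConvex (eco C) := ⟨_, eco_eq C⟩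

lemma eco_mono {C D : Set Y} (h : C ⊆ D) : eco C ⊆ eco D :=
  eco_min (eConvex_eco D) (h.trans (subset_eco D))

lemma eConvex_preimage (L : W →L[ℝ] Y) {D : Set Y} (hD : IsEConvex D) :
    IsEConvex (L ⁻¹' D) := by
  obtain ⟨S, rfl⟩ := hD
  refine ⟨(fun p => (p.1.comp L, p.2)) '' S, ?_⟩
  ext w
  simp only [Set.preimage_iInter, Set.preimage_setOf_eq, Set.biInter_image,
    ContinuousLinearMap.comp_apply]

end auxEco

theorem stmt4 [T2Space X] [LocallyConvexSpace ℝ X] [T2Space Z] [LocallyConvexSpace ℝ Z]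
    (K : Set Z) (hKconv : Convex ℝ K) (hKcone : ∀ c : ℝ, 0 < c → c • K ⊆ K)
    (hK0 : ({0} : Set Z) ⊂ K) (hKtop : K ≠ Set.univ)
    (f : X → Set Z) :
    Hf K f = Hf K (KEco K f) := by
  have h0K : (0 : Z) ∈ K := hK0.subset rfl
  -- f x ⊆ (KEco K f) x
  have hdom : ∀ x, f x ⊆ KEco K f x := by
    intro x z hz
    apply subset_eco
    show z ∈ f x + K
    simpa using Set.add_mem_add hz h0K
  -- projection of eco (epiK K f) lies in Mf f
  have hproj : eco (epiK K f) ⊆ (ContinuousLinearMap.fst ℝ X Z) ⁻¹' (Mf f) := by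
    apply eco_min (eConvex_preimage _ (eConvex_eco _))
    rintro ⟨x, z⟩ h
    obtain ⟨w, hw, k, hk, rfl⟩ := h
    have hxd : x ∈ svDom f := Set.nonempty_iff_ne_empty.mp ⟨w, hw⟩
    exact subset_eco _ hxd
  have hdomKE : svDom (KEco K f) ⊆ Mf f := by
    intro x hx
    obtain ⟨z, hz⟩ := Set.nonempty_iff_ne_empty.2 hx
    exact hproj hz
  -- Mf (KEco K f) = Mf f
  have hMf : Mf (KEco K f) = Mf f := by
    apply subset_antisymm
    · exact eco_min (eConvex_eco _) hdomKE
    · refine eco_mono fun x hx => ?_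
      obtain ⟨z, hz⟩ := Set.nonempty_iff_ne_empty.2 hx
      exact Set.nonempty_iff_ne_empty.1 ⟨z, hdom x hz⟩
  -- minorant equivalence for Mf f-affine functions
  have hminKE : ∀ a, IsCAffine K (Mf f) a →
      (IsMinorant K f a ↔ IsMinorant K (KEco K f) a) := by
    intro a haff
    constructor
    · intro h
      obtain ⟨x', z', hz', zt, ha⟩ := haff
      -- epiK K f is contained in the open halfspace H
      have hH : eco (epiK K f) ⊆ {p : X × Z | x' p.1 + z' p.2 < z' zt} := by
        apply eco_min
        · refine ⟨{(x'.comp (ContinuousLinearMap.fst ℝ X Z) +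
              z'.comp (ContinuousLinearMap.snd ℝ X Z), z' zt)}, ?_⟩
          ext p
          simp
        · rintro ⟨x, z⟩ hxz
          have hxdom : x ∈ Mf f := by
            apply subset_eco
            obtain ⟨w, hw, k, hk, rfl⟩ := hxz
            intro he
            rw [he] at hw
            exact hw
          have hz : z ∈ a x + K := h x hxz
          rw [ha x, if_pos hxdom] at hz
          obtain ⟨u, hu, k, hk, rfl⟩ := hz
          obtain ⟨s, hs, v, hv, rfl⟩ := hu
          rcases hv with rfl
          have hk' : z' k ≤ 0 := hz'.1 k hk
          have hs' : x' x + z' s < 0 := hs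
          show x' x + z' (s + v + k) < z' v
          rw [map_add, map_add]
          linarith
      intro x z hz
      obtain ⟨w, hw, k, hk, rfl⟩ := hz
      have hxM : x ∈ Mf f := hproj hw
      have hwH : x' x + z' w < z' zt := hH hw
      have hwa : w ∈ a x := by
        rw [ha x, if_pos hxM]
        refine ⟨w - zt, ?_, zt, rfl, sub_add_cancel w zt⟩
        show x' x + z' (w - zt) < 0
        rw [map_sub]
        linarith
      exact Set.add_mem_add hwa hk
    · intro h x
      exact (Set.add_subset_add_right (hdom x)).trans (h x)
  ext a
  simp only [Hf, Set.mem_setOf_eq, hMf]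
  constructor
  · rintro ⟨haff, hmin⟩
    exact ⟨haff, (hminKE a haff).1 hmin⟩
  · rintro ⟨haff, hmin⟩
    exact ⟨haff, (hminKE a haff).2 hmin⟩

end
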